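/- arXiv:2206.03644 — 2 statements merged into one kernel-verified Lean document; each statement's English description precedes it below -/
import Mathlib

section
/- Let Z = λI + ∑_{τ=1}^t g_τ g_τᵀ with λ > 0 and g_τ ∈ ℝ^p. Then the determinant ratio satisfies log(det(Z)/det(λI)) = ∑ over eigenvalues of the Gram update, and in particular ∑_{τ=1}^t min(1, gᵀ_τ Z_{τ−1}^{−1} g_τ) ≤ 2 log(det(Z_t)/det(λI)), where Z_τ = λI + ∑_{s=1}^τ g_s g_sᵀ. -/
open scoped Matrix

noncomputable def Zmat {p : ℕ} (lam : ℝ) (g : ℕ → Fin p → ℝ) (τ : ℕ) :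
    Matrix (Fin p) (Fin p) ℝ :=
  lam • (1 : Matrix (Fin p) (Fin p) ℝ) +
    ∑ s ∈ Finset.range τ, Matrix.vecMulVec (g s) (g s)

open Matrix
lemma vmv_psd {p : ℕ} (g : Fin p → ℝ) : (Matrix.vecMulVec g g).PosSemidef := by
  have := posSemidef_conjTranspose_mul_self (replicateRow Unit g)
  simpa [vecMulVec_eq Unit, conjTranspose_replicateRow] using this

lemma Z_posDef {p : ℕ} (lam : ℝ) (hlam : 0 < lam) (g : ℕ → Fin p → ℝ) (τ : ℕ) :
    (Zmat lam g τ).PosDef := by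
  refine Matrix.PosDef.add_posSemidef (R := ℝ) (m := Fin p) ?_ ?_
  · rw [smul_one_eq_diagonal]
    exact posDef_diagonal_iff.mpr fun _ => hlam
  · exact Finset.sum_induction _ _ (fun a b ha hb => ha.add hb) Matrix.PosSemidef.zero
      fun s _ => vmv_psd (g s)

lemma det_rec {p : ℕ} (lam : ℝ) (hlam : 0 < lam) (g : ℕ → Fin p → ℝ) (τ : ℕ) :
    (Zmat lam g (τ + 1)).det
      = (Zmat lam g τ).det * (1 + g τ ⬝ᵥ (Zmat lam g τ)⁻¹ *ᵥ g τ) := by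
  have hZ := Z_posDef lam hlam g τ
  have h1 : Zmat lam g (τ + 1) = Zmat lam g τ + replicateCol Unit (g τ) * replicateRow Unit (g τ) := by
    rw [Zmat, Zmat, Finset.sum_range_succ, ← add_assoc, vecMulVec_eq Unit]
  rw [h1, det_add_replicateCol_mul_replicateRow (isUnit_iff_ne_zero.mpr hZ.det_pos.ne') (g τ) (g τ)]
  congr 1
  rw [det_unique]
  have hsym : ∀ i j, (Zmat lam g τ)⁻¹ i j = (Zmat lam g τ)⁻¹ j i := by
    intro i j
    conv_lhs => rw [← hZ.inv.isHermitian]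
    simp [Matrix.conjTranspose_apply]
  simp [Matrix.mul_apply, Matrix.mulVec, dotProduct, Finset.mul_sum, Finset.sum_mul,
    mul_comm, mul_assoc, mul_left_comm]
  exact Finset.sum_congr rfl fun x _ => Finset.sum_congr rfl fun i _ => by rw [hsym]

lemma w_nonneg {p : ℕ} (lam : ℝ) (hlam : 0 < lam) (g : ℕ → Fin p → ℝ) (τ : ℕ) :
    0 ≤ g τ ⬝ᵥ (Zmat lam g τ)⁻¹ *ᵥ g τ := by
  have := ((Z_posDef lam hlam g τ).inv.posSemidef).dotProduct_mulVec_nonneg (g τ)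
  simpa using this

lemma min_le_two_log {w : ℝ} (hw : 0 ≤ w) : min 1 w ≤ 2 * Real.log (1 + w) :=
  by
  have h1 : (0:ℝ) < 1 + w := by linarith
  have hlog : w / (1 + w) ≤ Real.log (1 + w) := by
    have h := Real.one_sub_inv_le_log_of_pos h1
    have : 1 - (1 + w)⁻¹ = w / (1 + w) := by field_simp; ring
    linarith [this ▸ h]
  have hmin : min 1 w ≤ 2 * (w / (1 + w)) := by
    rcases le_total w 1 with h | h
    · rw [min_eq_right h, mul_div_assoc', le_div_iff₀ h1]
      nlinarith
    · rw [min_eq_left h, mul_div_assoc', le_div_iff₀ h1]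
      nlinarith
  linarith

theorem stmt9 {p : ℕ} (lam : ℝ) (hlam : 0 < lam) (t : ℕ) (g : ℕ → Fin p → ℝ) :
    ∑ τ ∈ Finset.range t, min 1 (g τ ⬝ᵥ (Zmat lam g τ)⁻¹ *ᵥ g τ) ≤
      2 * Real.log ((Zmat lam g t).det / (lam • (1 : Matrix (Fin p) (Fin p) ℝ)).det) := by
  have hZ0 : Zmat lam g 0 = lam • (1 : Matrix (Fin p) (Fin p) ℝ) := by
    simp [Zmat]
  have hdet : ∀ τ, 0 < (Zmat lam g τ).det := fun τ => (Z_posDef lam hlam g τ).det_pos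
  have key : ∀ n, ∑ τ ∈ Finset.range n, min 1 (g τ ⬝ᵥ (Zmat lam g τ)⁻¹ *ᵥ g τ) ≤
      2 * (Real.log (Zmat lam g n).det - Real.log (Zmat lam g 0).det) := by
    intro n
    induction n with
    | zero => simp
    | succ n ih =>
      rw [Finset.sum_range_succ]
      have hw := w_nonneg lam hlam g n
      have hlog : Real.log (Zmat lam g (n + 1)).det
          = Real.log (Zmat lam g n).det + Real.log (1 + g n ⬝ᵥ (Zmat lam g n)⁻¹ *ᵥ g n) := by
        rw [det_rec lam hlam g n, Real.log_mul (hdet n).ne' (by linarith)]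
      have hmin := min_le_two_log hw
      rw [hlog]
      linarith
  have := key t
  rwa [Real.log_div (hdet t).ne' (by rw [← hZ0]; exact (hdet 0).ne'), ← hZ0]
end

section
/- Let Z_τ = λI + ∑_{s=1}^τ g_s g_sᵀ with λ ≥ 1 and ‖g_s‖₂ ≤ 1 for all s. Then ∑_{τ=1}^T ‖g_τ‖²_{Z_{τ−1}^{−1}} ≤ 2 log(det(Z_T)/det(λI)), where ‖g‖²_M = gᵀ M g. -/
open scoped Matrix

private lemma sum_mulVec' {p : ℕ} (f : ℕ → Matrix (Fin p) (Fin p) ℝ) (s : Finset ℕ)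
    (v : Fin p → ℝ) : (∑ i ∈ s, f i) *ᵥ v = ∑ i ∈ s, f i *ᵥ v := by
  induction s using Finset.cons_induction with
  | empty => simp
  | cons a s ha ih => rw [Finset.sum_cons, Finset.sum_cons, Matrix.add_mulVec, ih]

private lemma dotProduct_sum' {p : ℕ} (v : Fin p → ℝ) (s : Finset ℕ) (f : ℕ → Fin p → ℝ) :
    v ⬝ᵥ ∑ i ∈ s, f i = ∑ i ∈ s, v ⬝ᵥ f i := by
  induction s using Finset.cons_induction with
  | empty => simp
  | cons a s ha ih => rw [Finset.sum_cons, Finset.sum_cons, dotProduct_add, ih]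

private lemma quad_vecMulVec {p : ℕ} (u v : Fin p → ℝ) :
    v ⬝ᵥ (Matrix.vecMulVec u u *ᵥ v) = (u ⬝ᵥ v) ^ 2 := by
  simp only [Matrix.mulVec, dotProduct, Matrix.vecMulVec_apply, pow_two]
  rw [Finset.sum_mul_sum]
  refine Finset.sum_congr rfl fun i _ => ?_
  rw [Finset.mul_sum]
  refine Finset.sum_congr rfl fun j _ => ?_
  ring

private lemma log_aux {x : ℝ} (h0 : 0 ≤ x) (h1 : x ≤ 1) : x ≤ 2 * Real.log (1 + x) := by
  have hx : (0:ℝ) < 1 + x := by linarith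
  have h := Real.log_le_sub_one_of_pos (show (0:ℝ) < (1+x)⁻¹ by positivity)
  rw [Real.log_inv] at h
  have hy : (1+x)⁻¹ * (1+x) = 1 := inv_mul_cancel₀ (ne_of_gt hx)
  nlinarith [mul_nonneg h0 (sub_nonneg.2 h1), mul_pos hx hx]

theorem stmt10 {p : ℕ} (lam : ℝ) (hlam : 1 ≤ lam) (T : ℕ) (g : ℕ → Fin p → ℝ)
    (hg : ∀ s, Real.sqrt (∑ i, g s i ^ 2) ≤ 1) :
    ∑ τ ∈ Finset.range T, (g τ ⬝ᵥ (Zmat lam g τ)⁻¹ *ᵥ g τ) ≤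
      2 * Real.log ((Zmat lam g T).det / (lam • (1 : Matrix (Fin p) (Fin p) ℝ)).det) := by
  set A := Zmat lam g with hAdef
  have hg2 : ∀ s, ∑ i, g s i ^ 2 ≤ 1 := by
    intro s
    have h := hg s
    have hnn : (0:ℝ) ≤ ∑ i, g s i ^ 2 := Finset.sum_nonneg fun i _ => sq_nonneg _
    nlinarith [Real.sq_sqrt hnn, Real.sqrt_nonneg (∑ i, g s i ^ 2)]
  -- quadratic form lower bound
  have hquad : ∀ τ (v : Fin p → ℝ), lam * (v ⬝ᵥ v) ≤ v ⬝ᵥ A τ *ᵥ v := by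
    intro τ v
    rw [hAdef]
    unfold Zmat
    rw [Matrix.add_mulVec, dotProduct_add, Matrix.smul_mulVec,
      Matrix.one_mulVec, dotProduct_smul, sum_mulVec',
      dotProduct_sum']
    have h2 : (0:ℝ) ≤ ∑ s ∈ Finset.range τ, v ⬝ᵥ (Matrix.vecMulVec (g s) (g s) *ᵥ v) := by
      refine Finset.sum_nonneg fun s _ => ?_
      rw [quad_vecMulVec]; exact sq_nonneg _
    simp only [smul_eq_mul]
    linarith
  have hdotself : ∀ v : Fin p → ℝ, (0:ℝ) ≤ v ⬝ᵥ v := by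
    intro v
    exact Finset.sum_nonneg fun i _ => mul_self_nonneg _
  have hquad1 : ∀ τ (v : Fin p → ℝ), v ⬝ᵥ v ≤ v ⬝ᵥ A τ *ᵥ v := by
    intro τ v
    have := hquad τ v
    nlinarith [hdotself v]
  -- positive definiteness
  have herm : ∀ τ, (A τ).IsHermitian := by
    intro τ
    rw [hAdef]
    unfold Zmat
    rw [Matrix.IsHermitian, Matrix.conjTranspose_add]
    congr 1
    · simp [Matrix.conjTranspose_smul]
    · rw [Matrix.conjTranspose_sum]
      refine Finset.sum_congr rfl fun s _ => ?_
      ext i j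
      simp [Matrix.vecMulVec_apply, mul_comm]
  have hpd : ∀ τ, (A τ).PosDef := by
    intro τ
    refine Matrix.PosDef.of_dotProduct_mulVec_pos (herm τ) fun v hv => ?_
    have hvv : 0 < v ⬝ᵥ v := by
      have := Matrix.dotProduct_star_self_pos_iff (v := v).mpr hv
      simpa using this
    have := hquad1 τ v
    simpa using lt_of_lt_of_le hvv this
  have hdet : ∀ τ, 0 < (A τ).det := fun τ => (hpd τ).det_pos
  have hdetu : ∀ τ, IsUnit (A τ).det := fun τ => (hdet τ).ne'.isUnit
  -- determinant step identity
  set x : ℕ → ℝ := fun τ => g τ ⬝ᵥ (A τ)⁻¹ *ᵥ g τ with hxdef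
  have hstep : ∀ τ, (A (τ+1)).det = (A τ).det * (1 + x τ) := by
    intro τ
    have hsucc : A (τ+1) = A τ + Matrix.vecMulVec (g τ) (g τ) := by
      rw [hAdef]; unfold Zmat
      rw [Finset.sum_range_succ, add_assoc]
    have hfac : A (τ+1) = A τ * (1 + (A τ)⁻¹ * Matrix.vecMulVec (g τ) (g τ)) := by
      rw [Matrix.mul_add, Matrix.mul_one, ← Matrix.mul_assoc,
        Matrix.mul_nonsing_inv _ (hdetu τ), Matrix.one_mul, hsucc]
    rw [hfac, Matrix.det_mul]
    congr 1
    rw [Matrix.vecMulVec_eq (Fin 1), ← Matrix.mul_assoc, ← Matrix.replicateCol_mulVec,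
      Matrix.det_one_add_replicateCol_mul_replicateRow]
  -- bounds on x
  have hxbounds : ∀ τ, 0 ≤ x τ ∧ x τ ≤ 1 := by
    intro τ
    set w : Fin p → ℝ := (A τ)⁻¹ *ᵥ g τ with hwdef
    have hgw : A τ *ᵥ w = g τ := by
      rw [hwdef, Matrix.mulVec_mulVec, Matrix.mul_nonsing_inv _ (hdetu τ),
        Matrix.one_mulVec]
    have hx : x τ = g τ ⬝ᵥ w := rfl
    have h1 : w ⬝ᵥ w ≤ x τ := by
      have := hquad1 τ w
      rw [hgw] at this
      rw [hx, dotProduct_comm (g τ) w]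
      exact this
    have h0 : 0 ≤ x τ := le_trans (hdotself w) h1
    -- Cauchy-Schwarz
    have hCS : (x τ) ^ 2 ≤ (∑ i, g τ i ^ 2) * (∑ i, w i ^ 2) := by
      rw [hx]
      exact Finset.sum_mul_sq_le_sq_mul_sq Finset.univ (g τ) w
    have hww : (∑ i, w i ^ 2) = w ⬝ᵥ w := by
      simp [dotProduct, pow_two]
    refine ⟨h0, ?_⟩
    have hgle := hg2 τ
    have hsw : (0:ℝ) ≤ ∑ i, w i ^ 2 := Finset.sum_nonneg fun i _ => sq_nonneg _
    nlinarith [hCS, hww, h1, hgle, hsw]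
  -- telescoping of logs
  have htel : ∀ N, ∑ τ ∈ Finset.range N, Real.log (1 + x τ)
      = Real.log (A N).det - Real.log (A 0).det := by
    intro N
    induction N with
    | zero => simp
    | succ n ih =>
      rw [Finset.sum_range_succ, ih, hstep n,
        Real.log_mul (hdet n).ne' (by nlinarith [(hxbounds n).1])]
      ring
  have hA0 : A 0 = lam • (1 : Matrix (Fin p) (Fin p) ℝ) := by
    rw [hAdef]; unfold Zmat; simp
  have hbound : ∑ τ ∈ Finset.range T, x τ
      ≤ ∑ τ ∈ Finset.range T, 2 * Real.log (1 + x τ) := by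
    refine Finset.sum_le_sum fun τ _ => ?_
    exact log_aux (hxbounds τ).1 (hxbounds τ).2
  calc ∑ τ ∈ Finset.range T, x τ
      ≤ ∑ τ ∈ Finset.range T, 2 * Real.log (1 + x τ) := hbound
    _ = 2 * (Real.log (A T).det - Real.log (A 0).det) := by
        rw [← Finset.mul_sum, htel T]
    _ = 2 * Real.log ((A T).det / (lam • (1 : Matrix (Fin p) (Fin p) ℝ)).det) := by
        rw [← hA0, Real.log_div (hdet T).ne' (hdet 0).ne']
end
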